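/- Let d ≥ 2, ε ∈ (0,1), let S = {γ₁, …, γ_{2r}} ⊂ SL_d(ℝ) be an ε-Schottky symmetric set of pairwise distinct proximal matrices, and let D denote the diameter of the metric space (ℙ(ℝ^d), dist). Then for every reduced word x₀, x₁, …, x_n in S, the subset (x₀ x₁ ⋯ x_{n−1})(b(x_n⁺, ε)) of ℙ(ℝ^d) has diameter at most εⁿ · D. -/

import Mathlib

open Polynomial Filter
open scoped Classical

noncomputable section

namespace Amalgam

variable {W : Type*} [NormedAddCommGroup W] [NormedSpace ℝ W]

/-- The distance between two subspaces of a normed space: the infimum of `‖x - y‖` over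
unit vectors `x ∈ X`, `y ∈ Y`.  For one-dimensional subspaces this is the metric on
projective space; for a line and a hyperplane it is the distance from the point of
projective space to the subset of projective space determined by the hyperplane. -/
def sdist (X Y : Submodule ℝ W) : ℝ :=
  sInf {r : ℝ | ∃ x ∈ X, ∃ y ∈ Y, ‖x‖ = 1 ∧ ‖y‖ = 1 ∧ r = ‖x - y‖}

/-- A point of projective space, i.e. a line through the origin. -/
def IsLine (X : Submodule ℝ W) : Prop := Module.finrank ℝ X = 1

/-- The diameter of the projective space of `W`. -/
def projDiam (W : Type*) [NormedAddCommGroup W] [NormedSpace ℝ W] : ℝ :=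
  sSup {t : ℝ | ∃ X Y : Submodule ℝ W, IsLine X ∧ IsLine Y ∧ t = sdist X Y}

variable [FiniteDimensional ℝ W]

/-- `f` is proximal: its characteristic polynomial has a unique complex root of maximal
modulus, and this root is real with multiplicity one. -/
def IsProximal (f : W →ₗ[ℝ] W) : Prop :=
  ∃ lam : ℝ,
    (Polynomial.map (algebraMap ℝ ℂ) (LinearMap.charpoly f)).roots.count (lam : ℂ) = 1 ∧
    ∀ μ ∈ (Polynomial.map (algebraMap ℝ ℂ) (LinearMap.charpoly f)).roots,
      μ ≠ (lam : ℂ) → ‖μ‖ < |lam|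

/-- The top eigenvalue of a proximal transformation (junk value `0` otherwise). -/
def topEig (f : W →ₗ[ℝ] W) : ℝ :=
  if h : IsProximal f then h.choose else 0

/-- The attracting eigenline `γ⁺` of a proximal transformation: the eigenspace of the
eigenvalue of maximal modulus. -/
def attLine (f : W →ₗ[ℝ] W) : Submodule ℝ W :=
  LinearMap.ker (f - topEig f • LinearMap.id)

/-- The repelling hyperplane `γ⁻` of a proximal transformation: the unique invariant
complement of the attracting line. -/
def repHyp (f : W →ₗ[ℝ] W) : Submodule ℝ W :=
  if h : ∃ H : Submodule ℝ W, Submodule.map f H ≤ H ∧ IsCompl (attLine f) H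
  then h.choose else ⊥

/-- `f` is `ε`-proximal: it is proximal, `dist(γ⁺, γ⁻) ≥ 2ε`, the induced action on
projective space is `ε`-Lipschitz on `B(γ⁻, ε)`, and maps `B(γ⁻, ε)` into `b(γ⁺, ε)`. -/
def IsEpsProximal (ε : ℝ) (f : W →ₗ[ℝ] W) : Prop :=
  IsProximal f ∧
  2 * ε ≤ sdist (attLine f) (repHyp f) ∧
  (∀ X Y : Submodule ℝ W, IsLine X → IsLine Y →
      ε ≤ sdist X (repHyp f) → ε ≤ sdist Y (repHyp f) →
      sdist (X.map f) (Y.map f) ≤ ε * sdist X Y) ∧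
  (∀ X : Submodule ℝ W, IsLine X → ε ≤ sdist X (repHyp f) →
      ε ≥ sdist (X.map f) (attLine f))

/-- An indexed family `f` (with `g i` playing the role of `(f i)⁻¹`) is `ε`-Schottky:
each member is `ε`-proximal and `dist((fᵢ)⁺, (fⱼ⁻¹)⁻) ≥ 6ε` for `i ≠ j`. -/
def IsSchottkyFam {ι : Type*} (ε : ℝ) (f g : ι → (W →ₗ[ℝ] W)) : Prop :=
  (∀ i, IsEpsProximal ε (f i)) ∧
  ∀ i j, i ≠ j → 6 * ε ≤ sdist (attLine (f i)) (repHyp (g j))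


abbrev E (d : ℕ) := EuclideanSpace ℝ (Fin d)
abbrev SL (d : ℕ) := Matrix.SpecialLinearGroup (Fin d) ℝ
abbrev Dual' (d : ℕ) := StrongDual ℝ (E d)

/-- The linear endomorphism of Euclidean space determined by a matrix in `SL_d(ℝ)`. -/
def toEnd {d : ℕ} (g : SL d) : E d →ₗ[ℝ] E d :=
  Matrix.toEuclideanLin (g : Matrix (Fin d) (Fin d) ℝ)

/-- The same map as a continuous linear map. -/
def toCLM {d : ℕ} (g : SL d) : E d →L[ℝ] E d :=
  LinearMap.toContinuousLinearMap (toEnd g)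

/-- The dual transformation `γ* : θ ↦ θ ∘ γ⁻¹` acting on the dual space `(ℝ^d)*`
(equipped with the dual norm). -/
def dualEnd {d : ℕ} (g : SL d) : Dual' d →ₗ[ℝ] Dual' d where
  toFun θ := θ.comp (toCLM g⁻¹)
  map_add' θ₁ θ₂ := by ext v; simp
  map_smul' c θ := by ext v; simp

/-- The kernel of a set of functionals: `{v : φ(v) = 0 for all φ ∈ Y}`. -/
def dualKer {d : ℕ} (Y : Submodule ℝ (Dual' d)) : Submodule ℝ (E d) where
  carrier := {v | ∀ φ ∈ Y, φ v = 0}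
  add_mem' := by
    intro a b ha hb φ hφ
    simp [map_add, ha φ hφ, hb φ hφ]
  zero_mem' := by intro φ hφ; simp
  smul_mem' := by
    intro c a ha φ hφ
    simp [ha φ hφ]

/-- The annihilator of a subspace inside the dual space. -/
def annih {d : ℕ} (U : Submodule ℝ (E d)) : Submodule ℝ (Dual' d) where
  carrier := {φ | ∀ v ∈ U, φ v = 0}
  add_mem' := by
    intro a b ha hb v hv
    simp [ha v hv, hb v hv]
  zero_mem' := by intro v hv; simp
  smul_mem' := by
    intro c a ha v hv
    simp [ha v hv]

/-- The operator norm of `g ∈ SL_d(ℝ)` (with respect to the Euclidean norm). -/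
def opN {d : ℕ} (g : SL d) : ℝ := ‖toCLM g‖

/-- The second compound matrix of a `d × d` matrix: the matrix of `2 × 2` minors,
indexed by increasingly ordered pairs. -/
def compound2 {d : ℕ} (g : Matrix (Fin d) (Fin d) ℝ) :
    Matrix {p : Fin d × Fin d // p.1 < p.2} {p : Fin d × Fin d // p.1 < p.2} ℝ :=
  fun p q => g p.1.1 q.1.1 * g p.1.2 q.1.2 - g p.1.1 q.1.2 * g p.1.2 q.1.1

/-- The operator norm of the second compound matrix (Euclidean norms). -/
def c2norm {d : ℕ} (g : Matrix (Fin d) (Fin d) ℝ) : ℝ :=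
  ‖LinearMap.toContinuousLinearMap (Matrix.toEuclideanLin (compound2 g))‖


/-- A reduced word in the set `S`: a nonempty finite sequence of elements of `S` in which
no letter is followed by its inverse. -/
def IsReducedWord {d : ℕ} (S : Set (SL d)) (w : List (SL d)) : Prop :=
  w ≠ [] ∧ (∀ a ∈ w, a ∈ S) ∧ List.Chain' (fun a b => b ≠ a⁻¹) w

/-- An infinite reduced word in the set `S`. -/
def IsInfReducedWord {d : ℕ} (S : Set (SL d)) (x : ℕ → SL d) : Prop :=
  (∀ i, x i ∈ S) ∧ ∀ i, x (i + 1) ≠ (x i)⁻¹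

/-- The partial product `x₀ x₁ ⋯ x_n` of an infinite word. -/
def wordProd {d : ℕ} (x : ℕ → SL d) (n : ℕ) : SL d :=
  ((List.range (n + 1)).map x).prod

/-- A family of matrices is symmetric if it is closed under inverses. -/
def SymmFam {ι : Type*} {d : ℕ} (γ : ι → SL d) : Prop :=
  ∀ i, ∃ j, γ j = (γ i)⁻¹

/-- The family `γ` is `ε`-Schottky as acting on `ℙ(ℝ^d)`. -/
def PrimalSchottky {ι : Type*} {d : ℕ} (ε : ℝ) (γ : ι → SL d) : Prop :=
  IsSchottkyFam ε (fun i => toEnd (γ i)) (fun i => toEnd ((γ i)⁻¹))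

/-- The dual family `γ*` is `ε`-Schottky as acting on `ℙ((ℝ^d)*)`. -/
def DualSchottky {ι : Type*} {d : ℕ} (ε : ℝ) (γ : ι → SL d) : Prop :=
  IsSchottkyFam ε (fun i => dualEnd (γ i)) (fun i => dualEnd ((γ i)⁻¹))

/-- `g` is biproximal: both `g` and `g⁻¹` are proximal. -/
def IsBiproximal {d : ℕ} (g : SL d) : Prop :=
  IsProximal (toEnd g) ∧ IsProximal (toEnd g⁻¹)

/-- A symmetric family of pairwise distinct biproximal matrices is well-positioned if the
attracting lines are pairwise distinct and `γᵢ⁺ ⊄ γⱼ⁻` whenever `γⱼ ≠ γᵢ⁻¹`. -/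
def WellPositioned {ι : Type*} {d : ℕ} (γ : ι → SL d) : Prop :=
  (∀ i, IsBiproximal (γ i)) ∧
  (∀ i j, i ≠ j → attLine (toEnd (γ i)) ≠ attLine (toEnd (γ j))) ∧
  (∀ i j, γ j ≠ (γ i)⁻¹ → ¬ attLine (toEnd (γ i)) ≤ repHyp (toEnd (γ j)))

/-- The spectral radius: maximal modulus of the complex roots of the characteristic
polynomial. -/
def specRad {W : Type*} [NormedAddCommGroup W] [NormedSpace ℝ W] [FiniteDimensional ℝ W]
    (f : W →ₗ[ℝ] W) : ℝ :=
  sSup {t : ℝ | ∃ μ ∈ (Polynomial.map (algebraMap ℝ ℂ) (LinearMap.charpoly f)).roots,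
      t = ‖μ‖}

/-! ### Auxiliary lemmas for Statement 6 -/

lemma sdist_nonneg' (X Y : Submodule ℝ W) : 0 ≤ sdist X Y :=
  Real.sInf_nonneg (by rintro r ⟨x, _, y, _, _, _, rfl⟩; positivity)

lemma sdist_bddBelow (X Y : Submodule ℝ W) :
    BddBelow {r : ℝ | ∃ x ∈ X, ∃ y ∈ Y, ‖x‖ = 1 ∧ ‖y‖ = 1 ∧ r = ‖x - y‖} :=
  ⟨0, by rintro r ⟨x, _, y, _, _, _, rfl⟩; positivity⟩

lemma sdist_le' {X Y : Submodule ℝ W} {x y : W} (hx : x ∈ X) (hy : y ∈ Y)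
    (hx1 : ‖x‖ = 1) (hy1 : ‖y‖ = 1) : sdist X Y ≤ ‖x - y‖ :=
  csInf_le (sdist_bddBelow X Y) ⟨x, hx, y, hy, hx1, hy1, rfl⟩

lemma exists_unit {X : Submodule ℝ W} (hX : IsLine X) : ∃ x ∈ X, ‖x‖ = 1 := by
  have hbot : X ≠ ⊥ := by
    intro h
    rw [IsLine, h] at hX
    simp at hX
  obtain ⟨x, hx, hx0⟩ := Submodule.exists_mem_ne_zero_of_ne_bot hbot
  refine ⟨‖x‖⁻¹ • x, X.smul_mem _ hx, ?_⟩
  have : ‖x‖ ≠ 0 := norm_ne_zero_iff.2 hx0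
  rw [norm_smul, norm_inv, norm_norm, inv_mul_cancel₀ this]

lemma unit_pm {X : Submodule ℝ W} (hX : IsLine X) {x y : W} (hx : x ∈ X) (hx1 : ‖x‖ = 1)
    (hy : y ∈ X) (hy1 : ‖y‖ = 1) : y = x ∨ y = -x := by
  have hx0 : x ≠ 0 := by
    intro h
    rw [h, norm_zero] at hx1
    norm_num at hx1
  have hfin : FiniteDimensional ℝ X := by
    refine FiniteDimensional.of_finrank_pos ?_
    rw [hX]; norm_num
  have hspan : Submodule.span ℝ ({x} : Set W) = X := by
    apply Submodule.eq_of_le_of_finrank_le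
      (Submodule.span_le.2 (by simpa using hx))
    rw [hX, finrank_span_singleton hx0]
  obtain ⟨c, hc⟩ := Submodule.mem_span_singleton.1 (hspan ▸ hy)
  have hcabs : |c| = 1 := by
    have : ‖c • x‖ = 1 := by rw [hc]; exact hy1
    rwa [norm_smul, hx1, mul_one, Real.norm_eq_abs] at this
  rcases abs_eq (by norm_num : (0:ℝ) ≤ 1) |>.1 hcabs with h1 | h1
  · left; rw [← hc, h1, one_smul]
  · right; rw [← hc, h1, neg_smul, one_smul]

/-- Triangle-type inequality: for lines `X` and a subspace `A`, and any subspace `H`,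
`sdist A H ≤ sdist X A + sdist X H`. -/
lemma sdist_triangle' {A X H : Submodule ℝ W} (hX : IsLine X) :
    sdist A H ≤ sdist X A + sdist X H := by
  by_cases hAu : ∃ a ∈ A, ‖a‖ = 1
  · by_cases hHu : ∃ h ∈ H, ‖h‖ = 1
    · refine le_of_forall_pos_le_add fun δ hδ => ?_
      obtain ⟨x₀, hx₀⟩ := exists_unit hX
      obtain ⟨a₀, ha₀⟩ := hAu
      obtain ⟨h₀, hh₀⟩ := hHu
      have hne1 : {r : ℝ | ∃ x ∈ X, ∃ y ∈ H, ‖x‖ = 1 ∧ ‖y‖ = 1 ∧ r = ‖x - y‖}.Nonempty :=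
        ⟨‖x₀ - h₀‖, x₀, hx₀.1, h₀, hh₀.1, hx₀.2, hh₀.2, rfl⟩
      have hne2 : {r : ℝ | ∃ x ∈ X, ∃ y ∈ A, ‖x‖ = 1 ∧ ‖y‖ = 1 ∧ r = ‖x - y‖}.Nonempty :=
        ⟨‖x₀ - a₀‖, x₀, hx₀.1, a₀, ha₀.1, hx₀.2, ha₀.2, rfl⟩
      obtain ⟨r₁, ⟨x, hxX, h, hhH, hx1, hh1, rfl⟩, hr₁⟩ :=
        Real.lt_sInf_add_pos hne1 (half_pos hδ)
      obtain ⟨r₂, ⟨x', hx'X, a, haA, hx'1, ha1, rfl⟩, hr₂⟩ :=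
        Real.lt_sInf_add_pos hne2 (half_pos hδ)
      have hxx : x' = x ∨ x' = -x := unit_pm hX hxX hx1 hx'X hx'1
      have key : ∃ a' ∈ A, ‖a'‖ = 1 ∧ ‖x - a'‖ = ‖x' - a‖ := by
        rcases hxx with h1 | h1
        · exact ⟨a, haA, ha1, by rw [h1]⟩
        · refine ⟨-a, A.neg_mem haA, by rwa [norm_neg], ?_⟩
          rw [h1, sub_neg_eq_add]
          rw [show -x - a = -(x + a) by abel, norm_neg]
      obtain ⟨a', ha'A, ha'1, ha'eq⟩ := key
      have h1 : sdist A H ≤ ‖a' - h‖ := sdist_le' ha'A hhH ha'1 hh1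
      have h2 : ‖a' - h‖ ≤ ‖a' - x‖ + ‖x - h‖ := norm_sub_le_norm_sub_add_norm_sub _ _ _
      have h3 : ‖a' - x‖ = ‖x' - a‖ := by rw [norm_sub_rev, ha'eq]
      have hr1 : ‖x - h‖ < sdist X H + δ / 2 := hr₁
      have hr2 : ‖x' - a‖ < sdist X A + δ / 2 := hr₂
      linarith
    · have hAH : {r : ℝ | ∃ x ∈ A, ∃ y ∈ H, ‖x‖ = 1 ∧ ‖y‖ = 1 ∧ r = ‖x - y‖} = ∅ := by
        ext r
        simp only [Set.mem_setOf_eq, Set.mem_empty_iff_false, iff_false]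
        rintro ⟨x, _, y, hy, _, hy1, rfl⟩
        exact hHu ⟨y, hy, hy1⟩
      have : sdist A H = 0 := by rw [sdist, hAH, Real.sInf_empty]
      rw [this]
      exact add_nonneg (sdist_nonneg' _ _) (sdist_nonneg' _ _)
  · have hAH : {r : ℝ | ∃ x ∈ A, ∃ y ∈ H, ‖x‖ = 1 ∧ ‖y‖ = 1 ∧ r = ‖x - y‖} = ∅ := by
      ext r
      simp only [Set.mem_setOf_eq, Set.mem_empty_iff_false, iff_false]
      rintro ⟨x, hx, y, _, hx1, _, rfl⟩
      exact hAu ⟨x, hx, hx1⟩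
    have : sdist A H = 0 := by rw [sdist, hAH, Real.sInf_empty]
    rw [this]
    exact add_nonneg (sdist_nonneg' _ _) (sdist_nonneg' _ _)

lemma sdist_le_two {X Y : Submodule ℝ W} (hX : IsLine X) (hY : IsLine Y) :
    sdist X Y ≤ 2 := by
  obtain ⟨x, hxX, hx1⟩ := exists_unit hX
  obtain ⟨y, hyY, hy1⟩ := exists_unit hY
  calc sdist X Y ≤ ‖x - y‖ := sdist_le' hxX hyY hx1 hy1
    _ ≤ ‖x‖ + ‖y‖ := norm_sub_le x y
    _ = 2 := by rw [hx1, hy1]; norm_num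

lemma sdist_le_projDiam {X Y : Submodule ℝ W} (hX : IsLine X) (hY : IsLine Y) :
    sdist X Y ≤ projDiam W := by
  refine le_csSup ⟨2, ?_⟩ ⟨X, Y, hX, hY, rfl⟩
  rintro t ⟨X', Y', hX', hY', rfl⟩
  exact sdist_le_two hX' hY'

lemma toEnd_mul {d : ℕ} (g h : SL d) : toEnd (g * h) = (toEnd g).comp (toEnd h) := by
  ext v
  simp [toEnd, Matrix.toEuclideanLin, Matrix.mulVec_mulVec]

lemma toEnd_one {d : ℕ} : toEnd (1 : SL d) = LinearMap.id := by
  ext v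
  simp [toEnd, Matrix.toEuclideanLin]

/-- The linear equivalence of Euclidean space determined by `g ∈ SL_d(ℝ)`. -/
def toEquiv {d : ℕ} (g : SL d) : E d ≃ₗ[ℝ] E d :=
  LinearEquiv.ofLinear (toEnd g) (toEnd g⁻¹)
    (by rw [← toEnd_mul, mul_inv_cancel, toEnd_one])
    (by rw [← toEnd_mul, inv_mul_cancel, toEnd_one])

lemma isLine_map {d : ℕ} (g : SL d) {X : Submodule ℝ (E d)} (hX : IsLine X) :
    IsLine (X.map (toEnd g)) := by
  have h : X.map (toEnd g) = X.map (toEquiv g : E d →ₗ[ℝ] E d) := rfl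
  rw [IsLine, h, LinearEquiv.finrank_map_eq]
  exact hX

/-- The main induction for Statement 6. -/
lemma statement6_aux {d r : ℕ} {ε : ℝ} (hε : ε ∈ Set.Ioo (0 : ℝ) 1)
    {γ : Fin (2 * r) → SL d} (hsym : SymmFam γ) (hS : PrimalSchottky ε γ) :
    ∀ (n : ℕ) (w : List (SL d)) (hlen : w.length = n + 1),
      IsReducedWord (Set.range γ) w →
      ∀ X Y : Submodule ℝ (E d), IsLine X → IsLine Y →
      sdist X (attLine (toEnd (w.get ⟨n, by omega⟩))) ≤ ε →
      sdist Y (attLine (toEnd (w.get ⟨n, by omega⟩))) ≤ ε →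
      IsLine (X.map (toEnd ((w.take n).prod))) ∧
      IsLine (Y.map (toEnd ((w.take n).prod))) ∧
      sdist (X.map (toEnd ((w.take n).prod))) (attLine (toEnd (w.get ⟨0, by omega⟩))) ≤ ε ∧
      sdist (Y.map (toEnd ((w.take n).prod))) (attLine (toEnd (w.get ⟨0, by omega⟩))) ≤ ε ∧
      sdist (X.map (toEnd ((w.take n).prod))) (Y.map (toEnd ((w.take n).prod)))
        ≤ ε ^ n * sdist X Y := by
  intro n
  induction n with
  | zero =>
    intro w hlen hw X Y hX hY hXb hYb
    rw [List.take_zero, List.prod_nil, toEnd_one, Submodule.map_id, Submodule.map_id]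
    exact ⟨hX, hY, hXb, hYb, by simp⟩
  | succ n IH =>
    intro w hlen hw X Y hX hY hXb hYb
    cases w with
    | nil => simp at hlen
    | cons a w' =>
      have hlen' : w'.length = n + 1 := by simpa using hlen
      have hw' : IsReducedWord (Set.range γ) w' := by
        refine ⟨?_, fun b hb => hw.2.1 b (List.mem_cons_of_mem a hb), hw.2.2.tail⟩
        intro h
        rw [h] at hlen'
        simp at hlen'
      obtain ⟨hLX', hLY', hnX', hnY', hcontr⟩ :=
        IH w' hlen' hw' X Y hX hY hXb hYb
      set p' := (w'.take n).prod with hp'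
      set X' := X.map (toEnd p') with hX'
      set Y' := Y.map (toEnd p') with hY'
      set b := w'.get ⟨0, by omega⟩ with hb
      obtain ⟨i, hi⟩ := hw.2.1 a List.mem_cons_self
      have hbmem : b ∈ a :: w' := List.mem_cons_of_mem a (List.get_mem w' ⟨0, by omega⟩)
      obtain ⟨j, hj⟩ := hw.2.1 b hbmem
      have hne : b ≠ a⁻¹ := by
        have hc := List.isChain_iff_getElem.mp hw.2.2 0
          (by rw [List.length_cons, hlen']; omega)
        exact hc
      obtain ⟨k, hk⟩ := hsym i
      have hjk : j ≠ k := by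
        intro h
        apply hne
        rw [← hj, h, hk, hi]
      have h6 : 6 * ε ≤ sdist (attLine (toEnd (γ j))) (repHyp (toEnd ((γ k)⁻¹))) :=
        hS.2 j k hjk
      have hk' : (γ k)⁻¹ = γ i := by rw [hk, inv_inv]
      rw [hk', hi, hj] at h6
      have hEP : IsEpsProximal ε (toEnd a) := by
        have h : IsEpsProximal ε (toEnd (γ i)) := hS.1 i
        rwa [hi] at h
      have farX : ε ≤ sdist X' (repHyp (toEnd a)) := by
        have tri := sdist_triangle' (A := attLine (toEnd b))
          (X := X') (H := repHyp (toEnd a)) hLX'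
        have hε0 := hε.1
        linarith
      have farY : ε ≤ sdist Y' (repHyp (toEnd a)) := by
        have tri := sdist_triangle' (A := attLine (toEnd b))
          (X := Y') (H := repHyp (toEnd a)) hLY'
        have hε0 := hε.1
        linarith
      have hLip := hEP.2.2.1 X' Y' hLX' hLY' farX farY
      have hnearX := hEP.2.2.2 X' hLX' farX
      have hnearY := hEP.2.2.2 Y' hLY' farY
      have hmap : ∀ Z : Submodule ℝ (E d),
          Z.map (toEnd (((a :: w').take (n + 1)).prod))
            = (Z.map (toEnd p')).map (toEnd a) := by
        intro Z
        rw [List.take_succ_cons, List.prod_cons, toEnd_mul, Submodule.map_comp]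
      refine ⟨?_, ?_, ?_, ?_, ?_⟩
      · rw [hmap]; exact isLine_map a hLX'
      · rw [hmap]; exact isLine_map a hLY'
      · rw [hmap]; exact hnearX
      · rw [hmap]; exact hnearY
      · rw [hmap, hmap]
        calc sdist (X'.map (toEnd a)) (Y'.map (toEnd a)) ≤ ε * sdist X' Y' := hLip
          _ ≤ ε * (ε ^ n * sdist X Y) :=
            mul_le_mul_of_nonneg_left hcontr hε.1.le
          _ = ε ^ (n + 1) * sdist X Y := by ring

/-- contraction of the attracting neighborhoods under reduced words. -/
theorem statement6 (d r : ℕ) (hd : 2 ≤ d) (ε : ℝ) (hε : ε ∈ Set.Ioo (0 : ℝ) 1)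
    (γ : Fin (2 * r) → SL d) (hdist : Function.Injective γ)
    (hprox : ∀ i, IsProximal (toEnd (γ i))) (hsym : SymmFam γ)
    (hS : PrimalSchottky ε γ)
    (w : List (SL d)) (n : ℕ) (hlen : w.length = n + 1)
    (hw : IsReducedWord (Set.range γ) w)
    (X Y : Submodule ℝ (E d)) (hX : IsLine X) (hY : IsLine Y)
    (hXb : sdist X (attLine (toEnd (w.get ⟨n, by omega⟩))) ≤ ε)
    (hYb : sdist Y (attLine (toEnd (w.get ⟨n, by omega⟩))) ≤ ε) :
    sdist (Submodule.map (toEnd ((w.take n).prod)) X)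
      (Submodule.map (toEnd ((w.take n).prod)) Y) ≤ ε ^ n * projDiam (E d) := by
  obtain ⟨-, -, -, -, h⟩ := statement6_aux hε hsym hS n w hlen hw X Y hX hY hXb hYb
  refine le_trans h ?_
  exact mul_le_mul_of_nonneg_left (sdist_le_projDiam hX hY) (pow_nonneg hε.1.le n)

end Amalgam
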